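/- arXiv:2102.00235 — 2 statements merged into one kernel-verified Lean document; each statement's English description precedes it below -/
import Mathlib

section
/- Let X ~ N(μ, σ²) with σ > 0. Then for every λ < 0, log E[ exp( λ (X² − E[X²]) ) ] ≤ λ² (σ⁴ + 2 μ² σ²). -/
open MeasureTheory ProbabilityTheory Real
open scoped NNReal ENNReal

lemma aux_integral_rexp_quadratic {b : ℝ} (hb : b < 0) (c d : ℝ) :
    ∫ x : ℝ, Real.exp (b * x ^ 2 + c * x + d)
      = Real.sqrt (π / (-b)) * Real.exp (d - c ^ 2 / (4 * b)) := by
  have h := integral_cexp_quadratic (b := (b : ℂ)) (by simpa using hb) (c : ℂ) (d : ℂ)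
  have h1 : ((∫ x : ℝ, Real.exp (b * x ^ 2 + c * x + d) : ℝ) : ℂ)
      = ∫ x : ℝ, Complex.exp ((b : ℂ) * (x : ℂ) ^ 2 + (c : ℂ) * (x : ℂ) + (d : ℂ)) := by
    rw [← Complex.coe_algebraMap, RCLike.algebraMap_eq_ofReal, ← integral_ofReal]
    refine integral_congr_ae (Filter.Eventually.of_forall fun x => ?_)
    rw [← RCLike.algebraMap_eq_ofReal, Complex.coe_algebraMap]
    push_cast [Complex.ofReal_exp]
    ring_nf
  have hπb : (0 : ℝ) ≤ π / (-b) := (div_pos Real.pi_pos (neg_pos.mpr hb)).le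
  have h2 : ((π : ℂ) / -(b : ℂ)) ^ (1 / 2 : ℂ) = ((Real.sqrt (π / (-b)) : ℝ) : ℂ) := by
    rw [Real.sqrt_eq_rpow, Complex.ofReal_cpow hπb]
    push_cast
    norm_num
  apply Complex.ofReal_injective
  rw [h1, h, h2]
  push_cast [Complex.ofReal_exp]
  ring

lemma aux_log_ge (y : ℝ) (hy : 0 ≤ y) : y - y ^ 2 / 2 ≤ Real.log (1 + y) := by
  set f : ℝ → ℝ := fun s => Real.log (1 + s) - s + s ^ 2 / 2 with hf
  have hderiv : ∀ s : ℝ, 0 ≤ s → HasDerivAt f ((1 + s)⁻¹ - 1 + s) s := by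
    intro s hs
    have h1 : (0:ℝ) < 1 + s := by linarith
    have hl : HasDerivAt (fun t : ℝ => Real.log (1 + t)) ((1 + s)⁻¹) s := by
      have := ((hasDerivAt_id s).const_add 1).log h1.ne'
      simpa using this
    have hsq : HasDerivAt (fun t : ℝ => t ^ 2 / 2) s s := by
      have := ((hasDerivAt_pow 2 s).div_const 2)
      simpa using this
    exact (hl.sub (hasDerivAt_id s)).add hsq
  have hmono : MonotoneOn f (Set.Ici (0 : ℝ)) := by
    apply monotoneOn_of_deriv_nonneg (convex_Ici 0)
    · intro s hs
      exact ((hderiv s hs).continuousAt).continuousWithinAt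
    · intro s hs
      rw [interior_Ici] at hs
      exact (hderiv s (le_of_lt hs)).differentiableAt.differentiableWithinAt
    · intro s hs
      rw [interior_Ici] at hs
      rw [(hderiv s (le_of_lt hs)).deriv]
      have h1 : (0:ℝ) < 1 + s := by linarith [(Set.mem_Ioi.mp hs).le]
      rw [← sub_nonneg] at *
      have : (1 + s)⁻¹ - 1 + s - 0 = s ^ 2 / (1 + s) := by field_simp; ring
      rw [this]
      positivity
  have h0 : f 0 ≤ f y := hmono (Set.self_mem_Ici) hy hy
  simp only [hf] at h0
  norm_num at h0
  linarith

/-- Sub-Gaussian bound on the centered log-MGF of the square of a Gaussian `X ~ N(μ, σ²)`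
for negative arguments: for `λ < 0`,
`log E[exp(λ(X² - E[X²]))] ≤ λ²(σ⁴ + 2μ²σ²)`, where `E[X²] = σ² + μ²`. -/
theorem stmt_9 (μ σ : ℝ) (hσ : 0 < σ) (l : ℝ) (hl : l < 0) :
    Real.log (∫ x, Real.exp (l * (x ^ 2 - (σ ^ 2 + μ ^ 2)))
        ∂(gaussianReal μ (Real.toNNReal (σ ^ 2))))
      ≤ l ^ 2 * (σ ^ 4 + 2 * μ ^ 2 * σ ^ 2) := by
  set v : ℝ := σ ^ 2 with hv
  have hv0 : 0 < v := by positivity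
  have hVne : (Real.toNNReal (σ ^ 2)) ≠ 0 := by
    simp only [ne_eq, Real.toNNReal_eq_zero, not_le]
    positivity
  have hVcoe : ((Real.toNNReal (σ ^ 2)) : ℝ) = v := Real.coe_toNNReal _ (by positivity)
  have hD : (0:ℝ) < 1 - 2 * l * v := by nlinarith
  -- Step 1: write the integral against the Gaussian as an integral against volume
  have hstep1 : (∫ x, Real.exp (l * (x ^ 2 - (σ ^ 2 + μ ^ 2)))
        ∂(gaussianReal μ (Real.toNNReal (σ ^ 2))))
      = ∫ x, gaussianPDFReal μ (Real.toNNReal (σ ^ 2)) x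
          * Real.exp (l * (x ^ 2 - (σ ^ 2 + μ ^ 2))) := by
    rw [gaussianReal_of_var_ne_zero μ hVne]
    have : gaussianPDF μ (Real.toNNReal (σ ^ 2))
        = fun x => ((Real.toNNReal (gaussianPDFReal μ (Real.toNNReal (σ ^ 2)) x) : ℝ≥0) : ℝ≥0∞) :=
      rfl
    rw [this, integral_withDensity_eq_integral_smul
      ((measurable_gaussianPDFReal _ _).real_toNNReal) _]
    congr 1
    ext x
    rw [NNReal.smul_def, smul_eq_mul, Real.coe_toNNReal _ (gaussianPDFReal_nonneg _ _ _)]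
  -- Step 2: combine exponentials into a single quadratic exponential
  set b : ℝ := l - 1 / (2 * v) with hb
  set c : ℝ := μ / v with hc
  set d : ℝ := -l * (v + μ ^ 2) - μ ^ 2 / (2 * v) with hd
  have hbneg : b < 0 := by
    rw [hb]
    have : 0 < 1 / (2 * v) := by positivity
    linarith
  have hstep2 : (∫ x, gaussianPDFReal μ (Real.toNNReal (σ ^ 2)) x
          * Real.exp (l * (x ^ 2 - (σ ^ 2 + μ ^ 2))))
      = (Real.sqrt (2 * π * v))⁻¹ * ∫ x : ℝ, Real.exp (b * x ^ 2 + c * x + d) := by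
    rw [← integral_const_mul]
    congr 1
    ext x
    rw [gaussianPDFReal, hVcoe, mul_assoc, ← Real.exp_add]
    congr 1
    rw [hb, hc, hd, hv]
    field_simp
    ring
  -- Step 3: evaluate the quadratic integral
  rw [hstep1, hstep2, aux_integral_rexp_quadratic hbneg c d]
  -- Step 4: take the log
  have h2πv : (0:ℝ) < 2 * π * v := by positivity
  have hπb : (0:ℝ) < π / (-b) := by
    apply div_pos Real.pi_pos
    linarith
  have hlog : Real.log ((Real.sqrt (2 * π * v))⁻¹
        * (Real.sqrt (π / (-b)) * Real.exp (d - c ^ 2 / (4 * b))))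
      = -(1/2) * Real.log (1 - 2 * l * v) + (d - c ^ 2 / (4 * b)) := by
    rw [Real.log_mul (by positivity) (by positivity),
      Real.log_mul (by positivity) (Real.exp_ne_zero _),
      Real.log_inv, Real.log_sqrt h2πv.le, Real.log_sqrt hπb.le, Real.log_exp]
    have hratio : π / (-b) = (2 * π * v) / (1 - 2 * l * v) := by
      rw [div_eq_div_iff (neg_pos.mpr hbneg).ne' hD.ne', hb]
      field_simp
      ring
    rw [hratio, Real.log_div h2πv.ne' hD.ne']
    ring
  rw [hlog]
  -- Step 5: simplify the exponent
  have hE : d - c ^ 2 / (4 * b) = -l * v + 2 * l ^ 2 * μ ^ 2 * v / (1 - 2 * l * v) := by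
    have h4b : 4 * b < 0 := by linarith
    have hden2 : (0:ℝ) < 2 * v * (1 - 2 * l * v) := by positivity
    have h1 : c ^ 2 / (4 * b) = -(μ ^ 2) / (2 * v * (1 - 2 * l * v)) := by
      rw [div_eq_div_iff (ne_of_lt h4b) hden2.ne', hb, hc]
      field_simp
      ring
    rw [h1, hd]
    field_simp [hD.ne', hv0.ne']
    have hD2 : (1 - l * v * 2) ≠ 0 := (by linarith : (0:ℝ) < 1 - l * v * 2).ne'
    field_simp
    ring
  rw [hE]
  -- Step 6: the final inequality
  have hbound1 : -(1/2) * Real.log (1 - 2 * l * v) + -l * v ≤ l ^ 2 * v ^ 2 := by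
    have hy : (0:ℝ) ≤ -(2 * l * v) := by nlinarith
    have := aux_log_ge (-(2 * l * v)) hy
    have heq : 1 + -(2 * l * v) = 1 - 2 * l * v := by ring
    rw [heq] at this
    nlinarith [this]
  have hbound2 : 2 * l ^ 2 * μ ^ 2 * v / (1 - 2 * l * v) ≤ 2 * l ^ 2 * μ ^ 2 * v := by
    apply div_le_self (by positivity)
    nlinarith
  have hgoal : l ^ 2 * (σ ^ 4 + 2 * μ ^ 2 * σ ^ 2) = l ^ 2 * v ^ 2 + 2 * l ^ 2 * μ ^ 2 * v := by
    rw [hv]; ring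
  rw [hgoal]
  linarith
end

section
/- Let G_1,…,G_m be i.i.d. standard Gaussian random variables and V = Σ_{j=1}^m G_j². Then for every real p ≥ 1, ( E[ |V³ − E[V³]|^p ] )^{1/p} ≤ 2⁶ (3p + m/2)³. -/
open MeasureTheory ProbabilityTheory Real
open scoped NNReal ENNReal

lemma preimage_ae_eq {Ω : Type*} [MeasurableSpace Ω] {P : Measure Ω} {f g : Ω → ℝ}
    (h : f =ᵐ[P] g) (s : Set ℝ) : f ⁻¹' s =ᵐ[P] g ⁻¹' s := by
  filter_upwards [h] with ω hω
  show (f ω ∈ s) = (g ω ∈ s)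
  rw [hω]

lemma iIndepFun_congr_ae {Ω : Type*} [MeasurableSpace Ω] {P : Measure Ω} {ι : Type*} [Countable ι]
    {f g : ι → Ω → ℝ} (h : iIndepFun f P)
    (hfg : ∀ i, f i =ᵐ[P] g i) :
    iIndepFun g P := by
  rw [iIndepFun_iff_measure_inter_preimage_eq_mul] at h ⊢
  intro S sets hsets
  have hae : ∀ᵐ ω ∂P, ∀ i, f i ω = g i ω := ae_all_iff.mpr hfg
  have h1 : (⋂ i ∈ S, g i ⁻¹' sets i) =ᵐ[P] (⋂ i ∈ S, f i ⁻¹' sets i) := by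
    rw [Filter.eventuallyEq_set]
    filter_upwards [hae] with ω hω
    simp only [Set.mem_iInter, Set.mem_preimage]
    exact ⟨fun h' i hi => by rw [hω i]; exact h' i hi,
           fun h' i hi => by rw [← hω i]; exact h' i hi⟩
  calc P (⋂ i ∈ S, g i ⁻¹' sets i) = P (⋂ i ∈ S, f i ⁻¹' sets i) := measure_congr h1
    _ = ∏ i ∈ S, P (f i ⁻¹' sets i) := h S hsets
    _ = ∏ i ∈ S, P (g i ⁻¹' sets i) :=
        Finset.prod_congr rfl fun i _ => measure_congr (preimage_ae_eq (hfg i) _)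

lemma rpow_le_const_mul_exp {q t x : ℝ} (hq : 0 < q) (ht : 0 < t) (hx : 0 ≤ x) :
    x ^ q ≤ (q / (t * exp 1)) ^ q * exp (t * x) := by
  rcases hx.eq_or_lt with rfl | hx'
  · rw [zero_rpow hq.ne']
    positivity
  · have hqt : 0 < q / (t * exp 1) := by positivity
    rw [rpow_def_of_pos hx', rpow_def_of_pos hqt, ← exp_add, exp_le_exp]
    have hlog : Real.log (t * x / q) ≤ t * x / q - 1 := log_le_sub_one_of_pos (by positivity)
    have hx_eq : Real.log x = Real.log (t * x / q) + Real.log (q / t) := by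
      rw [← Real.log_mul (by positivity) (by positivity)]
      congr 1
      field_simp
    have hlog2 : Real.log (q / (t * exp 1)) = Real.log (q / t) - 1 := by
      rw [show q / (t * exp 1) = q / t / exp 1 by ring,
        Real.log_div (div_pos hq ht).ne' (exp_pos 1).ne', Real.log_exp]
    have hcan : t * x / q * q = t * x := div_mul_cancel₀ (t * x) hq.ne'
    rw [hx_eq, hlog2]
    nlinarith [mul_le_mul_of_nonneg_right hlog hq.le]

lemma gaussian_exp_sq {t : ℝ} (ht : t < 1/2) :
    Integrable (fun x : ℝ => exp (t * x ^ 2)) (gaussianReal 0 1) ∧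
      ∫ x, exp (t * x ^ 2) ∂(gaussianReal 0 1) = (Real.sqrt (1 - 2 * t))⁻¹ := by
  have hb : 0 < 1/2 - t := by linarith
  have hpdf_nn : ∀ x, 0 ≤ gaussianPDFReal 0 1 x := gaussianPDFReal_nonneg 0 1
  have hmeas : Measurable fun x => (gaussianPDFReal 0 1 x).toNNReal :=
    (measurable_gaussianPDFReal 0 1).real_toNNReal
  have hdens : gaussianReal 0 1
      = volume.withDensity (fun x => ((gaussianPDFReal 0 1 x).toNNReal : ℝ≥0∞)) := by
    rw [gaussianReal_of_var_ne_zero 0 one_ne_zero]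
    rfl
  have hkey : ∀ x : ℝ, gaussianPDFReal 0 1 x * exp (t * x ^ 2)
      = (Real.sqrt (2 * π))⁻¹ * exp (-(1/2 - t) * x ^ 2) := by
    intro x
    simp only [gaussianPDFReal, NNReal.coe_one, mul_one, sub_zero]
    rw [mul_assoc, ← exp_add]
    congr 1
    ring
  have hint_vol : Integrable (fun x : ℝ => (Real.sqrt (2 * π))⁻¹ * exp (-(1/2 - t) * x ^ 2)) :=
    (integrable_exp_neg_mul_sq hb).const_mul _
  have hint : Integrable (fun x : ℝ => exp (t * x ^ 2)) (gaussianReal 0 1) := by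
    rw [hdens, integrable_withDensity_iff_integrable_smul hmeas]
    refine hint_vol.congr (Filter.Eventually.of_forall fun x => ?_)
    show (Real.sqrt (2 * π))⁻¹ * exp (-(1/2 - t) * x ^ 2)
      = (gaussianPDFReal 0 1 x).toNNReal • exp (t * x ^ 2)
    rw [NNReal.smul_def, Real.coe_toNNReal _ (hpdf_nn x), smul_eq_mul, hkey x]
  refine ⟨hint, ?_⟩
  rw [hdens, integral_withDensity_eq_integral_smul hmeas]
  have : ∫ x : ℝ, (gaussianPDFReal 0 1 x).toNNReal • exp (t * x ^ 2)
      = ∫ x : ℝ, (Real.sqrt (2 * π))⁻¹ * exp (-(1/2 - t) * x ^ 2) := by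
    refine integral_congr_ae (Filter.Eventually.of_forall fun x => ?_)
    show (gaussianPDFReal 0 1 x).toNNReal • exp (t * x ^ 2)
      = (Real.sqrt (2 * π))⁻¹ * exp (-(1/2 - t) * x ^ 2)
    rw [NNReal.smul_def, Real.coe_toNNReal _ (hpdf_nn x), smul_eq_mul, hkey x]
  rw [this, integral_const_mul, integral_gaussian]
  have h2 : Real.sqrt (2 * π) = Real.sqrt 2 * Real.sqrt π := Real.sqrt_mul (by norm_num) π
  have h3 : Real.sqrt (π / (1/2 - t)) = Real.sqrt π / Real.sqrt (1/2 - t) :=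
    Real.sqrt_div Real.pi_pos.le _
  have h4 : Real.sqrt (1 - 2 * t) = Real.sqrt 2 * Real.sqrt (1/2 - t) := by
    rw [← Real.sqrt_mul (by norm_num : (0:ℝ) ≤ 2)]
    congr 1
    ring
  have hπ : Real.sqrt π ≠ 0 := (Real.sqrt_pos.mpr Real.pi_pos).ne'
  have h2' : Real.sqrt 2 ≠ 0 := by positivity
  have hb' : Real.sqrt (1/2 - t) ≠ 0 := (Real.sqrt_pos.mpr hb).ne'
  rw [h2, h3, h4]
  calc (Real.sqrt 2 * Real.sqrt π)⁻¹ * (Real.sqrt π / Real.sqrt (1/2 - t))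
      = (Real.sqrt π * (Real.sqrt π)⁻¹) * ((Real.sqrt 2)⁻¹ * (Real.sqrt (1/2 - t))⁻¹) := by
        rw [mul_inv, div_eq_mul_inv]; ring
    _ = (Real.sqrt 2 * Real.sqrt (1/2 - t))⁻¹ := by
        rw [mul_inv_cancel₀ hπ, one_mul, mul_inv]

/-- L_p norm bound for the centered third power of a chi-square random variable with
`m` degrees of freedom: `‖V³ - E[V³]‖_{L_p} ≤ 2⁶ (3p + m/2)³` for every real `p ≥ 1`,
where `V = ∑ j, (G j)^2` for i.i.d. standard Gaussians `G j`. -/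
theorem stmt_12 {Ω : Type*} [MeasurableSpace Ω] (P : Measure Ω) [IsProbabilityMeasure P]
    (m : ℕ) (hm : 0 < m) (G : Fin m → Ω → ℝ)
    (hindep : iIndepFun G P)
    (hlaw : ∀ j, Measure.map (G j) P = gaussianReal 0 1)
    (p : ℝ) (hp : 1 ≤ p) :
    (∫ ω, |(∑ j, G j ω ^ 2) ^ 3 - ∫ ω', (∑ j, G j ω' ^ 2) ^ 3 ∂P| ^ p ∂P) ^ (1 / p)
      ≤ 2 ^ 6 * (3 * p + m / 2) ^ 3 := by
  have hp0 : 0 < p := lt_of_lt_of_le one_pos hp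
  set a : ℝ := (m : ℝ) / 2 with ha_def
  have hm' : (0:ℝ) < m := by exact_mod_cast hm
  have ha : 0 < a := by rw [ha_def]; positivity
  -- measurable modifications
  have hGae : ∀ j, AEMeasurable (G j) P := by
    intro j
    by_contra h
    have h0 := Measure.map_of_not_aemeasurable h
    rw [hlaw j] at h0
    exact IsProbabilityMeasure.ne_zero (gaussianReal 0 1) h0
  set G' : Fin m → Ω → ℝ := fun j => (hGae j).mk (G j) with hG'def
  have hG'meas : ∀ j, Measurable (G' j) := fun j => (hGae j).measurable_mk
  have hGG' : ∀ j, G j =ᵐ[P] G' j := fun j => (hGae j).ae_eq_mk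
  have hlaw' : ∀ j, Measure.map (G' j) P = gaussianReal 0 1 := fun j => by
    rw [← Measure.map_congr (hGG' j), hlaw j]
  have hindep' : iIndepFun G' P := iIndepFun_congr_ae hindep hGG'
  set X : Fin m → Ω → ℝ := fun j ω => G' j ω ^ 2 with hXdef
  have hXmeas : ∀ j, Measurable (X j) := fun j => (hG'meas j).pow_const 2
  have hindepX : iIndepFun X P :=
    hindep'.comp (fun _ (x : ℝ) => x ^ 2) (fun _ => measurable_id.pow_const 2)
  set Y : Ω → ℝ := fun ω => ∑ j, G' j ω ^ 2 with hYdef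
  have hYmeas : Measurable Y :=
    Finset.measurable_sum Finset.univ (fun j _ => (hG'meas j).pow_const 2)
  have hYnn : ∀ ω, 0 ≤ Y ω := fun ω => Finset.sum_nonneg fun j _ => sq_nonneg _
  have hYsum : (∑ j, X j) = Y := by
    ext ω
    simp [hXdef, hYdef, Finset.sum_apply]
  have hSY : (fun ω => ∑ j, G j ω ^ 2) =ᵐ[P] Y := by
    filter_upwards [ae_all_iff.mpr hGG'] with ω hω
    simp only [hYdef]
    exact Finset.sum_congr rfl fun j _ => by rw [hω j]
  -- key moment bound : E[Y^q] ≤ (2(q+a))^q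
  have key : ∀ q : ℝ, 0 < q → Integrable (fun ω => Y ω ^ q) P ∧
      ∫ ω, Y ω ^ q ∂P ≤ (2 * (q + a)) ^ q := by
    intro q hq
    set t : ℝ := q / (2 * (q + a)) with htdef
    have hqa : 0 < q + a := by linarith
    have ht : 0 < t := div_pos hq (by linarith)
    have ht2 : t < 1/2 := by
      rw [htdef, div_lt_iff₀ (by linarith)]
      linarith
    have hcont : Continuous fun x : ℝ => Real.exp (t * x ^ 2) :=
      (continuous_const.mul (continuous_pow 2)).rexp
    have hint_j : ∀ j, Integrable (fun ω => Real.exp (t * X j ω)) P := by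
      intro j
      have h1 := (gaussian_exp_sq ht2).1
      rw [← hlaw' j] at h1
      exact (integrable_map_measure hcont.aestronglyMeasurable
        (hG'meas j).aemeasurable).mp h1
    have hmgfj : ∀ j, mgf (X j) P t = (Real.sqrt (1 - 2 * t))⁻¹ := by
      intro j
      have hrfl : mgf (X j) P t = ∫ ω, Real.exp (t * X j ω) ∂P := rfl
      have hmap : ∫ ω, Real.exp (t * X j ω) ∂P
          = ∫ x, Real.exp (t * x ^ 2) ∂(Measure.map (G' j) P) :=
        (integral_map (hG'meas j).aemeasurable hcont.aestronglyMeasurable).symm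
      rw [hrfl, hmap, hlaw' j, (gaussian_exp_sq ht2).2]
    have hintY : Integrable (fun ω => Real.exp (t * Y ω)) P := by
      have h1 := hindepX.integrable_exp_mul_sum hXmeas (fun j (_ : j ∈ Finset.univ) => hint_j j)
      rwa [hYsum] at h1
    have hmgf_val : ∫ ω, Real.exp (t * Y ω) ∂P = ((Real.sqrt (1 - 2 * t))⁻¹) ^ m := by
      have h2 := hindepX.mgf_sum (t := t) hXmeas Finset.univ
      have h3 : mgf (∑ j, X j) P t = ∫ ω, Real.exp (t * Y ω) ∂P := by rw [hYsum]; rfl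
      rw [← h3, h2, Finset.prod_congr rfl (fun j _ => hmgfj j), Finset.prod_const,
        Finset.card_univ, Fintype.card_fin]
    have h12t : 1 - 2 * t = a / (q + a) := by
      rw [htdef]
      field_simp
      ring
    have hu0 : (0:ℝ) < (q + a) / a := by positivity
    have hBval : ((Real.sqrt (1 - 2 * t))⁻¹ : ℝ) ^ m ≤ Real.exp q := by
      have hinv : (Real.sqrt (1 - 2 * t))⁻¹ = Real.sqrt ((q + a) / a) := by
        rw [h12t, show a / (q + a) = ((q + a) / a)⁻¹ by rw [inv_div], Real.sqrt_inv, inv_inv]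
      have hsq : (Real.sqrt ((q + a) / a)) ^ m = ((q + a) / a) ^ ((m : ℝ) / 2) := by
        rw [Real.sqrt_eq_rpow, ← Real.rpow_natCast (((q + a) / a) ^ ((1:ℝ)/2)) m,
          ← Real.rpow_mul hu0.le]
        ring_nf
      rw [hinv, hsq, ← ha_def, Real.rpow_def_of_pos hu0, Real.exp_le_exp]
      have hlog : Real.log ((q + a) / a) ≤ (q + a) / a - 1 := Real.log_le_sub_one_of_pos hu0
      have : (q + a) / a - 1 = q / a := by field_simp; ring
      rw [this] at hlog
      calc Real.log ((q + a) / a) * a ≤ q / a * a :=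
            mul_le_mul_of_nonneg_right hlog ha.le
        _ = q := by field_simp
    have hqte : q / (t * Real.exp 1) = 2 * (q + a) / Real.exp 1 := by
      rw [htdef]
      field_simp
    have hC : (0:ℝ) < 2 * (q + a) / Real.exp 1 := by positivity
    have hpt : ∀ ω, Y ω ^ q ≤ (2 * (q + a) / Real.exp 1) ^ q * Real.exp (t * Y ω) := by
      intro ω
      have h := rpow_le_const_mul_exp hq ht (hYnn ω)
      rwa [hqte] at h
    have hYq_meas : Measurable fun ω => Y ω ^ q :=
      (Real.continuous_rpow_const hq.le).measurable.comp hYmeas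
    have hYq_int : Integrable (fun ω => Y ω ^ q) P := by
      refine Integrable.mono' (hintY.const_mul ((2 * (q + a) / Real.exp 1) ^ q))
        hYq_meas.aestronglyMeasurable (Filter.Eventually.of_forall fun ω => ?_)
      rw [Real.norm_eq_abs, abs_of_nonneg (Real.rpow_nonneg (hYnn ω) q)]
      exact hpt ω
    refine ⟨hYq_int, ?_⟩
    calc ∫ ω, Y ω ^ q ∂P
        ≤ ∫ ω, (2 * (q + a) / Real.exp 1) ^ q * Real.exp (t * Y ω) ∂P :=
          integral_mono_of_nonneg
            (Filter.Eventually.of_forall fun ω => Real.rpow_nonneg (hYnn ω) q)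
            (hintY.const_mul _) (Filter.Eventually.of_forall hpt)
      _ = (2 * (q + a) / Real.exp 1) ^ q * ∫ ω, Real.exp (t * Y ω) ∂P := integral_const_mul _ _
      _ ≤ (2 * (q + a) / Real.exp 1) ^ q * Real.exp q := by
          rw [hmgf_val]
          exact mul_le_mul_of_nonneg_left hBval (Real.rpow_nonneg hC.le q)
      _ = (2 * (q + a)) ^ q := by
          rw [← Real.exp_one_rpow q, ← Real.mul_rpow hC.le (Real.exp_pos 1).le,
            div_mul_cancel₀ _ (Real.exp_pos 1).ne']
  -- two point mean inequality
  have two_pt : ∀ {x y : ℝ}, 0 ≤ x → 0 ≤ y →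
      (x + y) ^ p ≤ 2 ^ (p - 1) * (x ^ p + y ^ p) := by
    intro x y hx hy
    have h := NNReal.rpow_add_le_mul_rpow_add_rpow x.toNNReal y.toNNReal hp
    have h2 := NNReal.coe_le_coe.mpr h
    push_cast at h2
    rwa [Real.coe_toNNReal x hx, Real.coe_toNNReal y hy] at h2
  -- the constant c
  set c : ℝ := ∫ ω', (∑ j, G j ω' ^ 2) ^ 3 ∂P with hcdef
  have hc_eq : c = ∫ ω, Y ω ^ (3:ℝ) ∂P := by
    rw [hcdef]
    refine integral_congr_ae ?_
    filter_upwards [hSY] with ω hω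
    rw [hω, ← Real.rpow_natCast (Y ω) 3]
    norm_num
  have hc_nn : 0 ≤ c := by
    rw [hc_eq]
    exact integral_nonneg fun ω => Real.rpow_nonneg (hYnn ω) _
  have hc_le : c ≤ (2 * (3 + a)) ^ (3:ℝ) := by
    rw [hc_eq]
    exact (key 3 (by norm_num)).2
  have key3p := key (3 * p) (by linarith)
  have hbase : (0:ℝ) < 2 * (3 * p + a) := by linarith
  -- main integral bound
  have hmain : ∫ ω, |(∑ j, G j ω ^ 2) ^ 3 - c| ^ p ∂P
      ≤ 2 ^ p * (2 * (3 * p + a)) ^ (3 * p) := by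
    have hgint : Integrable (fun ω => 2 ^ (p - 1) * (Y ω ^ (3 * p) + c ^ p)) P :=
      (key3p.1.add (integrable_const _)).const_mul _
    have hle : ∀ᵐ ω ∂P, |(∑ j, G j ω ^ 2) ^ 3 - c| ^ p
        ≤ 2 ^ (p - 1) * (Y ω ^ (3 * p) + c ^ p) := by
      filter_upwards [hSY] with ω hω
      have hY3 : (0:ℝ) ≤ Y ω ^ (3:ℕ) := pow_nonneg (hYnn ω) 3
      have habs : |(∑ j, G j ω ^ 2) ^ 3 - c| ≤ Y ω ^ (3:ℕ) + c := by
        rw [hω, abs_le]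
        constructor <;> nlinarith
      have h1 : |(∑ j, G j ω ^ 2) ^ 3 - c| ^ p ≤ (Y ω ^ (3:ℕ) + c) ^ p :=
        Real.rpow_le_rpow (abs_nonneg _) habs (by linarith)
      have h2 := two_pt hY3 hc_nn
      have h3 : (Y ω ^ (3:ℕ)) ^ p = Y ω ^ (3 * p) := by
        rw [← Real.rpow_natCast (Y ω) 3, ← Real.rpow_mul (hYnn ω)]
        norm_num
      rw [h3] at h2
      linarith
    calc ∫ ω, |(∑ j, G j ω ^ 2) ^ 3 - c| ^ p ∂P
        ≤ ∫ ω, 2 ^ (p - 1) * (Y ω ^ (3 * p) + c ^ p) ∂P :=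
          integral_mono_of_nonneg
            (Filter.Eventually.of_forall fun ω => Real.rpow_nonneg (abs_nonneg _) p)
            hgint hle
      _ = 2 ^ (p - 1) * ((∫ ω, Y ω ^ (3 * p) ∂P) + c ^ p) := by
          rw [integral_const_mul, integral_add key3p.1 (integrable_const _), integral_const]
          simp
      _ ≤ 2 ^ (p - 1) * ((2 * (3 * p + a)) ^ (3 * p) + (2 * (3 * p + a)) ^ (3 * p)) := by
          have hcp : c ^ p ≤ (2 * (3 * p + a)) ^ (3 * p) := by
            calc c ^ p ≤ ((2 * (3 + a)) ^ (3:ℝ)) ^ p :=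
                  Real.rpow_le_rpow hc_nn hc_le hp0.le
              _ = (2 * (3 + a)) ^ (3 * p) := by
                  rw [← Real.rpow_mul (by linarith)]
              _ ≤ (2 * (3 * p + a)) ^ (3 * p) :=
                  Real.rpow_le_rpow (by linarith) (by nlinarith) (by positivity)
          have := key3p.2
          have h2p : (0:ℝ) ≤ 2 ^ (p - 1) := Real.rpow_nonneg (by norm_num) _
          nlinarith
      _ = 2 ^ p * (2 * (3 * p + a)) ^ (3 * p) := by
          have h2 : (2:ℝ) ^ (p - 1) * 2 = 2 ^ p := by
            rw [Real.rpow_sub (by norm_num : (0:ℝ) < 2), Real.rpow_one]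
            field_simp
          calc 2 ^ (p - 1) * ((2 * (3 * p + a)) ^ (3 * p) + (2 * (3 * p + a)) ^ (3 * p))
              = (2 ^ (p - 1) * 2) * (2 * (3 * p + a)) ^ (3 * p) := by ring
            _ = 2 ^ p * (2 * (3 * p + a)) ^ (3 * p) := by rw [h2]
  have hI_nn : 0 ≤ ∫ ω, |(∑ j, G j ω ^ 2) ^ 3 - c| ^ p ∂P :=
    integral_nonneg fun ω => Real.rpow_nonneg (abs_nonneg _) _
  calc (∫ ω, |(∑ j, G j ω ^ 2) ^ 3 - c| ^ p ∂P) ^ (1 / p)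
      ≤ (2 ^ p * (2 * (3 * p + a)) ^ (3 * p)) ^ (1 / p) :=
        Real.rpow_le_rpow hI_nn hmain (by positivity)
    _ = 2 * (2 * (3 * p + a)) ^ (3:ℝ) := by
        rw [Real.mul_rpow (Real.rpow_nonneg (by norm_num) _) (Real.rpow_nonneg hbase.le _),
          ← Real.rpow_mul (by norm_num : (0:ℝ) ≤ 2), ← Real.rpow_mul hbase.le,
          mul_one_div_cancel hp0.ne', Real.rpow_one]
        congr 1
        field_simp
    _ ≤ 2 ^ 6 * (3 * p + a) ^ 3 := by
        have hcast : (2 * (3 * p + a)) ^ (3:ℝ) = (2 * (3 * p + a)) ^ (3:ℕ) := by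
          rw [← Real.rpow_natCast (2 * (3 * p + a)) 3]
          norm_num
        have h8 : (2 * (3 * p + a)) ^ (3:ℕ) = 8 * (3 * p + a) ^ 3 := by ring
        rw [hcast, h8]
        have hnn : (0:ℝ) ≤ (3 * p + a) ^ 3 := by positivity
        nlinarith
end
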